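/- For any p ∈ [1,∞), any depth-d network N_{W₁^d} with 1-Lipschitz activations vanishing at 0, satisfying ∏_{j=1}^d ‖W_j‖ ≥ Γ (spectral norms) and ∏_{j=1}^d ‖W_j‖_p ≤ M (Schatten p-norms), and any r ∈ {1,…,d}, there exists a network N_{W̃₁^d} of the same architecture identical to N_{W₁^d} except that the parameter matrix in some layer r' ∈ {1,…,r} is replaced by a matrix of rank at most 1 (equal to s·u·vᵀ for a leading singular value/vector pair of W_{r'}), such that sup_{‖x‖≤B} ‖N_{W₁^d}(x) − N_{W̃₁^d}(x)‖ ≤ B·(∏_{j=1}^d ‖W_j‖)·(2p·log(M/Γ)/r)^{1/p}. -/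

import Mathlib

open scoped Matrix


noncomputable def singularValues {a b : ℕ} (W : Matrix (Fin a) (Fin b) ℝ) : Fin b → ℝ :=
  fun i => Real.sqrt ((show (W.transpose * W).IsHermitian by
    simpa using Matrix.isHermitian_conjTranspose_mul_self W).eigenvalues i)

/-- Schatten `p`-norm: the `ℓ_p` norm of the vector of singular values. -/
noncomputable def schattenNorm {a b : ℕ} (p : ℝ) (W : Matrix (Fin a) (Fin b) ℝ) : ℝ :=
  (∑ i, singularValues W i ^ p) ^ (1 / p)

/-- Spectral norm: the largest singular value. -/
noncomputable def specNorm {a b : ℕ} (W : Matrix (Fin a) (Fin b) ℝ) : ℝ :=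
  ⨆ i, singularValues W i

noncomputable def mulVecE {a b : ℕ} (W : Matrix (Fin a) (Fin b) ℝ)
    (x : EuclideanSpace ℝ (Fin b)) : EuclideanSpace ℝ (Fin a) :=
  WithLp.toLp 2 (W.mulVec x)

/-- The "activated stack": `actStack k x = σ_{k-1}(W_{k-1} ⋯ σ_0(W_0 x))`. -/
noncomputable def actStack (dims : ℕ → ℕ)
    (W : ∀ j : ℕ, Matrix (Fin (dims (j+1))) (Fin (dims j)) ℝ)
    (σ : ∀ j : ℕ, EuclideanSpace ℝ (Fin (dims (j+1))) → EuclideanSpace ℝ (Fin (dims (j+1)))) :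
    (k : ℕ) → EuclideanSpace ℝ (Fin (dims 0)) → EuclideanSpace ℝ (Fin (dims k))
  | 0 => fun x => x
  | k+1 => fun x => σ k (mulVecE (W k) (actStack dims W σ k x))

/-- Depth-`d` network (`d ≥ 1`): a final linear layer on top of the activated stack,
`netEval d x = W_{d-1} σ_{d-2}(W_{d-2} ⋯ σ_0(W_0 x))`. -/
noncomputable def netEval (dims : ℕ → ℕ)
    (W : ∀ j : ℕ, Matrix (Fin (dims (j+1))) (Fin (dims j)) ℝ)
    (σ : ∀ j : ℕ, EuclideanSpace ℝ (Fin (dims (j+1))) → EuclideanSpace ℝ (Fin (dims (j+1)))) :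
    (d : ℕ) → EuclideanSpace ℝ (Fin (dims 0)) → EuclideanSpace ℝ (Fin (dims d))
  | 0 => fun x => x
  | d+1 => fun x => mulVecE (W d) (actStack dims W σ d x)

lemma Matrix.isHermitian_transpose_mul_self' {a b : ℕ} (W : Matrix (Fin a) (Fin b) ℝ) :
    (W.transpose * W).IsHermitian := by
  simpa using Matrix.isHermitian_conjTranspose_mul_self W

lemma sv_nonneg {a b : ℕ} (W : Matrix (Fin a) (Fin b) ℝ) (i : Fin b) :
    0 ≤ singularValues W i := Real.sqrt_nonneg _

lemma sv_sq {a b : ℕ} (W : Matrix (Fin a) (Fin b) ℝ) (i : Fin b) :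
    singularValues W i ^ 2 = (Matrix.isHermitian_transpose_mul_self' W).eigenvalues i :=
  Real.sq_sqrt (Matrix.eigenvalues_conjTranspose_mul_self_nonneg W i)

lemma sv_le_specNorm {a b : ℕ} (W : Matrix (Fin a) (Fin b) ℝ) (i : Fin b) :
    singularValues W i ≤ specNorm W :=
  le_ciSup (Set.Finite.bddAbove (Set.finite_range _)) i

lemma specNorm_nonneg {a b : ℕ} (W : Matrix (Fin a) (Fin b) ℝ) : 0 ≤ specNorm W := by
  rcases isEmpty_or_nonempty (Fin b) with h | h
  · simp [specNorm, Real.iSup_of_isEmpty]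
  · obtain ⟨i⟩ := h
    exact le_trans (sv_nonneg W i) (sv_le_specNorm W i)

lemma inner_mulVecE {a b : ℕ} (W : Matrix (Fin a) (Fin b) ℝ)
    (y z : EuclideanSpace ℝ (Fin b)) :
    (inner ℝ y (mulVecE (Wᴴ * W) z) : ℝ) = inner ℝ (mulVecE W y) (mulVecE W z) := by
  simp only [mulVecE, EuclideanSpace.inner_eq_star_dotProduct]
  simp only [star_trivial]
  rw [← Matrix.mulVec_mulVec, dotProduct_comm, Matrix.dotProduct_mulVec (v := y.ofLp),
    Matrix.vecMul_conjTranspose]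
  simp only [star_trivial]
  exact dotProduct_comm _ _

lemma mulVecE_sum {a b : ℕ} (W : Matrix (Fin a) (Fin b) ℝ) {ι : Type*} (s : Finset ι)
    (f : ι → EuclideanSpace ℝ (Fin b)) :
    mulVecE W (∑ i ∈ s, f i) = ∑ i ∈ s, mulVecE W (f i) := by
  ext k
  simp [mulVecE, Matrix.mulVec_sum]

lemma mulVecE_smul {a b : ℕ} (W : Matrix (Fin a) (Fin b) ℝ) (c : ℝ)
    (x : EuclideanSpace ℝ (Fin b)) : mulVecE W (c • x) = c • mulVecE W x := by
  ext k
  simp [mulVecE, Matrix.mulVec_smul]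

lemma mulVecE_sub {a b : ℕ} (W : Matrix (Fin a) (Fin b) ℝ)
    (x y : EuclideanSpace ℝ (Fin b)) : mulVecE W (x - y) = mulVecE W x - mulVecE W y := by
  ext k
  simp [mulVecE, Matrix.mulVec_sub]

lemma sub_mulVecE {a b : ℕ} (W V : Matrix (Fin a) (Fin b) ℝ)
    (x : EuclideanSpace ℝ (Fin b)) : mulVecE (W - V) x = mulVecE W x - mulVecE V x := by
  ext k
  simp [mulVecE, Matrix.sub_mulVec]

lemma norm_mulVecE_sq {a b : ℕ} (W : Matrix (Fin a) (Fin b) ℝ)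
    (x : EuclideanSpace ℝ (Fin b)) :
    ‖mulVecE W x‖ ^ 2 = ∑ i, (Matrix.isHermitian_transpose_mul_self' W).eigenvalues i *
      (inner ℝ ((Matrix.isHermitian_transpose_mul_self' W).eigenvectorBasis i) x : ℝ) ^ 2 := by
  set hA := Matrix.isHermitian_transpose_mul_self' W with hhA
  set v := hA.eigenvectorBasis with hv
  have key : mulVecE (Wᴴ * W) x = ∑ i, ((inner ℝ (v i) x : ℝ) * hA.eigenvalues i) • v i := by
    conv_lhs => rw [← v.sum_repr' x]
    rw [mulVecE_sum]
    refine Finset.sum_congr rfl fun i _ => ?_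
    rw [mulVecE_smul]
    have : mulVecE (Wᴴ * W) (v i) = hA.eigenvalues i • v i := by
      ext k
      have := congrFun (hA.mulVec_eigenvectorBasis i) k
      simpa [mulVecE] using this
    rw [this, smul_smul, mul_comm]
  have h1 : ‖mulVecE W x‖ ^ 2 = (inner ℝ x (mulVecE (Wᴴ * W) x) : ℝ) := by
    rw [inner_mulVecE, real_inner_self_eq_norm_sq]
  rw [h1, key, inner_sum]
  refine Finset.sum_congr rfl fun i _ => ?_
  rw [real_inner_smul_right, real_inner_comm]
  ring

lemma parseval {b : ℕ} (v : OrthonormalBasis (Fin b) ℝ (EuclideanSpace ℝ (Fin b)))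
    (x : EuclideanSpace ℝ (Fin b)) :
    ∑ i, (inner ℝ (v i) x : ℝ) ^ 2 = ‖x‖ ^ 2 := by
  have h := v.sum_inner_mul_inner x x
  rw [real_inner_self_eq_norm_sq] at h
  rw [← h]
  refine Finset.sum_congr rfl fun i _ => ?_
  rw [real_inner_comm (v i) x, sq]

lemma norm_mulVecE_le {a b : ℕ} (W : Matrix (Fin a) (Fin b) ℝ)
    (x : EuclideanSpace ℝ (Fin b)) :
    ‖mulVecE W x‖ ≤ specNorm W * ‖x‖ := by
  have h2 : ‖mulVecE W x‖ ^ 2 ≤ (specNorm W * ‖x‖) ^ 2 := by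
    rw [norm_mulVecE_sq, mul_pow, ← parseval (Matrix.isHermitian_transpose_mul_self' W).eigenvectorBasis x,
      Finset.mul_sum]
    refine Finset.sum_le_sum fun i _ => ?_
    have hμ : (Matrix.isHermitian_transpose_mul_self' W).eigenvalues i ≤ specNorm W ^ 2 := by
      rw [← sv_sq]
      exact pow_le_pow_left₀ (sv_nonneg W i) (sv_le_specNorm W i) 2
    exact mul_le_mul_of_nonneg_right hμ (sq_nonneg _)
  have := Real.sqrt_le_sqrt h2
  rwa [Real.sqrt_sq (norm_nonneg _),
    Real.sqrt_sq (mul_nonneg (specNorm_nonneg W) (norm_nonneg _))] at this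

lemma schattenNorm_nonneg {a b : ℕ} (p : ℝ) (W : Matrix (Fin a) (Fin b) ℝ) :
    0 ≤ schattenNorm p W :=
  Real.rpow_nonneg (Finset.sum_nonneg fun i _ => Real.rpow_nonneg (sv_nonneg W i) p) _

lemma schattenNorm_pow {a b : ℕ} {p : ℝ} (hp : 1 ≤ p) (W : Matrix (Fin a) (Fin b) ℝ) :
    schattenNorm p W ^ p = ∑ i, singularValues W i ^ p := by
  have hp0 : p ≠ 0 := by positivity
  rw [schattenNorm, ← Real.rpow_mul
    (Finset.sum_nonneg fun i _ => Real.rpow_nonneg (sv_nonneg W i) p), one_div,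
    inv_mul_cancel₀ hp0, Real.rpow_one]

lemma sv_le_schattenNorm {a b : ℕ} {p : ℝ} (hp : 1 ≤ p) (W : Matrix (Fin a) (Fin b) ℝ)
    (i : Fin b) : singularValues W i ≤ schattenNorm p W := by
  have hp0 : 0 < p := lt_of_lt_of_le one_pos hp
  have h1 : singularValues W i = (singularValues W i ^ p) ^ (1/p) := by
    rw [← Real.rpow_mul (sv_nonneg W i), mul_one_div, div_self (ne_of_gt hp0), Real.rpow_one]
  rw [h1, schattenNorm]
  refine Real.rpow_le_rpow (Real.rpow_nonneg (sv_nonneg W i) p) ?_ (by positivity)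
  exact Finset.single_le_sum (fun j _ => Real.rpow_nonneg (sv_nonneg W j) p) (Finset.mem_univ i)

lemma specNorm_le_schattenNorm {a b : ℕ} {p : ℝ} (hp : 1 ≤ p) (W : Matrix (Fin a) (Fin b) ℝ) :
    specNorm W ≤ schattenNorm p W := by
  rcases isEmpty_or_nonempty (Fin b) with h | h
  · rw [specNorm, Real.iSup_of_isEmpty]
    exact schattenNorm_nonneg p W
  · exact ciSup_le fun i => sv_le_schattenNorm hp W i

lemma rank_one_approx {a b : ℕ} {p : ℝ} (hp : 1 ≤ p) (W : Matrix (Fin a) (Fin b) ℝ) :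
    ∃ Wt : Matrix (Fin a) (Fin b) ℝ, Wt.rank ≤ 1 ∧
      ∀ x : EuclideanSpace ℝ (Fin b), ‖mulVecE W x - mulVecE Wt x‖ ≤
        (schattenNorm p W ^ p - specNorm W ^ p) ^ (1/p) * ‖x‖ := by
  have hp0 : 0 < p := lt_of_lt_of_le one_pos hp
  have hbase : 0 ≤ schattenNorm p W ^ p - specNorm W ^ p :=
    sub_nonneg.2 (Real.rpow_le_rpow (specNorm_nonneg W) (specNorm_le_schattenNorm hp W)
      (le_of_lt hp0))
  set ε : ℝ := (schattenNorm p W ^ p - specNorm W ^ p) ^ (1/p) with hεdef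
  have hε : 0 ≤ ε := Real.rpow_nonneg hbase _
  rcases isEmpty_or_nonempty (Fin b) with hbe | hbe
  · refine ⟨0, ?_, fun x => ?_⟩
    · rw [Matrix.rank_zero]; exact zero_le_one
    · have hWx : mulVecE W x = mulVecE 0 x := by
        ext i
        simp [mulVecE, Matrix.mulVec, dotProduct, Finset.univ_eq_empty]
      rw [hWx, sub_self, norm_zero]
      positivity
  · set hA := Matrix.isHermitian_transpose_mul_self' W with hhA
    set v := hA.eigenvectorBasis with hv
    obtain ⟨i₀, -, hmax⟩ := Finset.exists_max_image Finset.univ (singularValues W)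
      ⟨Classical.arbitrary _, Finset.mem_univ _⟩
    have hspec : specNorm W = singularValues W i₀ :=
      le_antisymm (ciSup_le fun i => hmax i (Finset.mem_univ i)) (sv_le_specNorm W i₀)
    set u : EuclideanSpace ℝ (Fin b) := v i₀ with hu
    refine ⟨W * Matrix.vecMulVec (u : Fin b → ℝ) (u : Fin b → ℝ), ?_, fun x => ?_⟩
    · refine le_trans (Matrix.rank_mul_le_right _ _) ?_
      have hr : LinearMap.range (Matrix.vecMulVec (u : Fin b → ℝ) (u : Fin b → ℝ)).mulVecLin
          ≤ Submodule.span ℝ {(u : Fin b → ℝ)} := by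
        rintro y ⟨z, rfl⟩
        have hz : (Matrix.vecMulVec (u : Fin b → ℝ) (u : Fin b → ℝ)).mulVecLin z
            = (dotProduct (u : Fin b → ℝ) z) • (u : Fin b → ℝ) := by
          funext i
          show ∑ j, Matrix.vecMulVec (u : Fin b → ℝ) (u : Fin b → ℝ) i j * z j
              = dotProduct (u : Fin b → ℝ) z * u i
          rw [dotProduct, Finset.sum_mul]
          exact Finset.sum_congr rfl fun j _ => by rw [Matrix.vecMulVec_apply]; ring
        rw [hz]
        exact Submodule.smul_mem _ _ (Submodule.mem_span_singleton_self _)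
      refine le_trans (Submodule.finrank_mono hr) ?_
      refine le_trans (finrank_span_le_card _) ?_
      simp
    · set c : ℝ := inner ℝ u x with hc
      have hWt : mulVecE (W * Matrix.vecMulVec (u : Fin b → ℝ) (u : Fin b → ℝ)) x
          = mulVecE W (c • u) := by
        show WithLp.toLp 2 ((W * Matrix.vecMulVec (u : Fin b → ℝ) (u : Fin b → ℝ)).mulVec x)
          = WithLp.toLp 2 (W.mulVec (c • u))
        rw [← Matrix.mulVec_mulVec]
        have hv2 : Matrix.vecMulVec (u : Fin b → ℝ) (u : Fin b → ℝ) *ᵥ (x : Fin b → ℝ)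
            = c • (u : Fin b → ℝ) := by
          funext i
          show ∑ j, Matrix.vecMulVec (u : Fin b → ℝ) (u : Fin b → ℝ) i j * x j = c * u i
          have hcs : c = ∑ j, u j * x j := by
            simp [hc, PiLp.inner_apply, RCLike.inner_apply, mul_comm]
          rw [hcs, Finset.sum_mul]
          exact Finset.sum_congr rfl fun j _ => by
            rw [Matrix.vecMulVec_apply]; ring
        rw [hv2]
      rw [hWt, ← mulVecE_sub]
      set y : EuclideanSpace ℝ (Fin b) := x - c • u with hy
      have hiy : ∀ i, (inner ℝ (v i) y : ℝ) = if i = i₀ then 0 else (inner ℝ (v i) x : ℝ) := by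
        intro i
        rw [hy, inner_sub_right, real_inner_smul_right]
        have horth := orthonormal_iff_ite.mp v.orthonormal i i₀
        split_ifs with h
        · subst h
          rw [hc, hu, horth]
          simp
        · rw [hu, horth]
          simp [h]
      have hsvle : ∀ i, i ≠ i₀ → singularValues W i ≤ ε := by
        intro i hi
        have hsum : singularValues W i₀ ^ p + singularValues W i ^ p
            ≤ ∑ j, singularValues W j ^ p := by
          have hpair := Finset.sum_pair (f := fun j => singularValues W j ^ p)
            (show i₀ ≠ i from fun h => hi h.symm)
          rw [← hpair]
          exact Finset.sum_le_sum_of_subset_of_nonneg (Finset.subset_univ _)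
            (fun j _ _ => Real.rpow_nonneg (sv_nonneg W j) p)
        have h1 : singularValues W i ^ p ≤ schattenNorm p W ^ p - specNorm W ^ p := by
          rw [schattenNorm_pow hp, hspec]; linarith
        have h2 : singularValues W i = (singularValues W i ^ p) ^ (1/p) := by
          rw [← Real.rpow_mul (sv_nonneg W i), mul_one_div, div_self (ne_of_gt hp0),
            Real.rpow_one]
        rw [h2, hεdef]
        exact Real.rpow_le_rpow (Real.rpow_nonneg (sv_nonneg W i) p) h1 (by positivity)
      have key : ‖mulVecE W y‖ ^ 2 ≤ (ε * ‖x‖) ^ 2 := by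
        rw [norm_mulVecE_sq, mul_pow, ← parseval v x, Finset.mul_sum]
        refine Finset.sum_le_sum fun i _ => ?_
        rw [show (inner ℝ ((Matrix.isHermitian_transpose_mul_self' W).eigenvectorBasis i) y : ℝ)
            = (inner ℝ (v i) y : ℝ) from rfl, hiy i]
        split_ifs with h
        · have : (0:ℝ) ≤ ε ^ 2 * (inner ℝ (v i) x : ℝ) ^ 2 := by positivity
          simpa using this
        · refine mul_le_mul_of_nonneg_right ?_ (sq_nonneg _)
          rw [← sv_sq]
          exact pow_le_pow_left₀ (sv_nonneg W i) (hsvle i h) 2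
      have := Real.sqrt_le_sqrt key
      rwa [Real.sqrt_sq (norm_nonneg _), Real.sqrt_sq (mul_nonneg hε (norm_nonneg _))] at this





section Net

variable (dims : ℕ → ℕ)
    (W Wt : ∀ j : ℕ, Matrix (Fin (dims (j+1))) (Fin (dims j)) ℝ)
    (σ : ∀ j : ℕ, EuclideanSpace ℝ (Fin (dims (j+1))) → EuclideanSpace ℝ (Fin (dims (j+1))))

lemma sigma_norm_le (hσ : ∀ j, LipschitzWith 1 (σ j))
    (j : ℕ) (y z : EuclideanSpace ℝ (Fin (dims (j+1)))) : ‖σ j y - σ j z‖ ≤ ‖y - z‖ := by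
  have := (hσ j).dist_le_mul y z
  simpa [dist_eq_norm] using this

lemma actStack_norm_le (hσ : ∀ j, LipschitzWith 1 (σ j)) (hσ0 : ∀ j, σ j 0 = 0)
    (k : ℕ) (x : EuclideanSpace ℝ (Fin (dims 0))) :
    ‖actStack dims W σ k x‖ ≤ (∏ j ∈ Finset.range k, specNorm (W j)) * ‖x‖ := by
  induction k with
  | zero => simp [actStack]
  | succ k ih =>
    have h1 : ‖actStack dims W σ (k+1) x‖ ≤ ‖mulVecE (W k) (actStack dims W σ k x)‖ := by
      have := sigma_norm_le dims σ hσ k (mulVecE (W k) (actStack dims W σ k x)) 0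
      rw [hσ0 k, sub_zero, sub_zero] at this
      exact this
    refine h1.trans ((norm_mulVecE_le _ _).trans ?_)
    rw [Finset.prod_range_succ, mul_comm (∏ j ∈ Finset.range k, specNorm (W j)) _, mul_assoc]
    exact mul_le_mul_of_nonneg_left ih (specNorm_nonneg _)

lemma actStack_congr (hagree : ∀ j, j < k → Wt j = W j) (x : EuclideanSpace ℝ (Fin (dims 0))) :
    actStack dims Wt σ k x = actStack dims W σ k x := by
  induction k with
  | zero => rfl
  | succ k ih =>
    show σ k (mulVecE (Wt k) _) = σ k (mulVecE (W k) _)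
    rw [hagree k (Nat.lt_succ_self k), ih (fun j hj => hagree j (hj.trans (Nat.lt_succ_self k)))]

lemma net_perturb (hσ : ∀ j, LipschitzWith 1 (σ j)) (hσ0 : ∀ j, σ j 0 = 0)
    {d r' : ℕ} (hr' : r' < d) (hagree : ∀ j, j ≠ r' → Wt j = W j)
    {ε : ℝ} (hε : 0 ≤ ε)
    (hpert : ∀ v : EuclideanSpace ℝ (Fin (dims r')),
      ‖mulVecE (W r') v - mulVecE (Wt r') v‖ ≤ ε * ‖v‖)
    (x : EuclideanSpace ℝ (Fin (dims 0))) :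
    ‖netEval dims W σ d x - netEval dims Wt σ d x‖ ≤
      ε * (∏ j ∈ (Finset.range d).erase r', specNorm (W j)) * ‖x‖ := by
  have hAB : ∀ k, k ≤ r' → actStack dims Wt σ k x = actStack dims W σ k x := fun k hk =>
    actStack_congr dims W Wt σ (fun j hj => hagree j (by omega)) x
  have key : ∀ k, r' < k → ‖actStack dims W σ k x - actStack dims Wt σ k x‖ ≤
      ε * (∏ j ∈ (Finset.range k).erase r', specNorm (W j)) * ‖x‖ := by
    intro k
    induction k with
    | zero => omega
    | succ k ih =>
      intro hk
      rcases Nat.lt_succ_iff_lt_or_eq.mp hk with hlt | heq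
      · -- r' < k
        have hWk : Wt k = W k := hagree k (by omega)
        have h1 : ‖actStack dims W σ (k+1) x - actStack dims Wt σ (k+1) x‖ ≤
            ‖mulVecE (W k) (actStack dims W σ k x - actStack dims Wt σ k x)‖ := by
          show ‖σ k (mulVecE (W k) _) - σ k (mulVecE (Wt k) _)‖ ≤ _
          rw [hWk, mulVecE_sub]
          exact sigma_norm_le dims σ hσ k _ _
        refine h1.trans ((norm_mulVecE_le _ _).trans ?_)
        have hprod : (∏ j ∈ (Finset.range (k+1)).erase r', specNorm (W j))
            = specNorm (W k) * ∏ j ∈ (Finset.range k).erase r', specNorm (W j) := by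
          rw [Finset.range_add_one, Finset.erase_insert_of_ne (by omega : k ≠ r'),
            Finset.prod_insert (fun h => Finset.notMem_range_self (Finset.mem_of_mem_erase h))]
        rw [hprod, mul_comm ε, mul_assoc, mul_assoc]
        exact mul_le_mul_of_nonneg_left ((ih hlt).trans_eq (by ring)) (specNorm_nonneg _)
      · -- r' = k
        subst heq
        have hA := hAB r' le_rfl
        have h1 : ‖actStack dims W σ (r'+1) x - actStack dims Wt σ (r'+1) x‖ ≤
            ‖mulVecE (W r') (actStack dims W σ r' x) -
              mulVecE (Wt r') (actStack dims W σ r' x)‖ := by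
          show ‖σ r' (mulVecE (W r') _) - σ r' (mulVecE (Wt r') _)‖ ≤ _
          rw [hA]
          exact sigma_norm_le dims σ hσ r' _ _
        refine h1.trans ((hpert _).trans ?_)
        have hprod : (∏ j ∈ (Finset.range (r'+1)).erase r', specNorm (W j))
            = ∏ j ∈ Finset.range r', specNorm (W j) := by
          rw [Finset.range_add_one, Finset.erase_insert Finset.notMem_range_self]
        rw [hprod, mul_assoc]
        exact mul_le_mul_of_nonneg_left
          (actStack_norm_le dims W σ hσ hσ0 r' x) hε
  cases d with
  | zero => omega
  | succ m =>
    rcases Nat.lt_succ_iff_lt_or_eq.mp hr' with hlt | heq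
    · have hWm : Wt m = W m := hagree m (by omega)
      have h1 : ‖netEval dims W σ (m+1) x - netEval dims Wt σ (m+1) x‖ ≤
          ‖mulVecE (W m) (actStack dims W σ m x - actStack dims Wt σ m x)‖ := by
        show ‖mulVecE (W m) _ - mulVecE (Wt m) _‖ ≤ _
        rw [hWm, mulVecE_sub]
      refine h1.trans ((norm_mulVecE_le _ _).trans ?_)
      have hprod : (∏ j ∈ (Finset.range (m+1)).erase r', specNorm (W j))
          = specNorm (W m) * ∏ j ∈ (Finset.range m).erase r', specNorm (W j) := by
        rw [Finset.range_add_one, Finset.erase_insert_of_ne (by omega : m ≠ r'),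
          Finset.prod_insert (fun h => Finset.notMem_range_self (Finset.mem_of_mem_erase h))]
      rw [hprod, mul_comm ε, mul_assoc, mul_assoc]
      exact mul_le_mul_of_nonneg_left ((key m hlt).trans_eq (by ring)) (specNorm_nonneg _)
    · subst heq
      have hA := hAB r' le_rfl
      have h1 : ‖netEval dims W σ (r'+1) x - netEval dims Wt σ (r'+1) x‖ ≤ ε *
          ‖actStack dims W σ r' x‖ := by
        show ‖mulVecE (W r') _ - mulVecE (Wt r') _‖ ≤ _
        rw [hA]
        exact hpert _
      refine h1.trans ?_
      have hprod : (∏ j ∈ (Finset.range (r'+1)).erase r', specNorm (W j))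
          = ∏ j ∈ Finset.range r', specNorm (W j) := by
        rw [Finset.range_add_one, Finset.erase_insert Finset.notMem_range_self]
      rw [hprod, mul_assoc]
      exact mul_le_mul_of_nonneg_left (actStack_norm_le dims W σ hσ hσ0 r' x) hε

lemma netEval_norm_le (hσ : ∀ j, LipschitzWith 1 (σ j)) (hσ0 : ∀ j, σ j 0 = 0)
    {d : ℕ} (hd : 1 ≤ d) (x : EuclideanSpace ℝ (Fin (dims 0))) :
    ‖netEval dims W σ d x‖ ≤ (∏ j ∈ Finset.range d, specNorm (W j)) * ‖x‖ := by
  cases d with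
  | zero => omega
  | succ m =>
    show ‖mulVecE (W m) (actStack dims W σ m x)‖ ≤ _
    refine (norm_mulVecE_le _ _).trans ?_
    rw [Finset.prod_range_succ, mul_comm (∏ j ∈ Finset.range m, specNorm (W j)) _, mul_assoc]
    exact mul_le_mul_of_nonneg_left (actStack_norm_le dims W σ hσ hσ0 m x) (specNorm_nonneg _)

lemma netEval_zero_layer (hσ0 : ∀ j, σ j 0 = 0) {d r' : ℕ} (hr' : r' < d)
    (hzero : W r' = 0) (x : EuclideanSpace ℝ (Fin (dims 0))) :
    netEval dims W σ d x = 0 := by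
  have hm0 : ∀ (n : ℕ) (M : Matrix (Fin (dims (n+1))) (Fin (dims n)) ℝ),
      mulVecE M (0 : EuclideanSpace ℝ (Fin (dims n))) = 0 := by
    intro n M
    ext k
    simp [mulVecE]
  have hz0 : ∀ (n : ℕ) (y : EuclideanSpace ℝ (Fin (dims n))),
      mulVecE (0 : Matrix (Fin (dims (n+1))) (Fin (dims n)) ℝ) y = 0 := by
    intro n y
    ext k
    simp [mulVecE]
  have key : ∀ k, r' < k → actStack dims W σ k x = 0 := by
    intro k
    induction k with
    | zero => omega
    | succ k ih =>
      intro hk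
      rcases Nat.lt_succ_iff_lt_or_eq.mp hk with hlt | heq
      · show σ k (mulVecE (W k) _) = 0
        rw [ih hlt, hm0, hσ0]
      · subst heq
        show σ r' (mulVecE (W r') _) = 0
        rw [hzero, hz0, hσ0]
  cases d with
  | zero => omega
  | succ m =>
    rcases Nat.lt_succ_iff_lt_or_eq.mp hr' with hlt | heq
    · show mulVecE (W m) _ = 0
      rw [key m hlt, hm0]
    · subst heq
      show mulVecE (W r') _ = 0
      rw [hzero, hz0]

end Net

lemma exp_le_one_add_two_mul {z : ℝ} (h0 : 0 ≤ z) (h1 : z ≤ 1) : Real.exp z ≤ 1 + 2*z := by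
  have hcx := convexOn_exp.2 (Set.mem_univ (0:ℝ)) (Set.mem_univ (1:ℝ))
    (by linarith : (0:ℝ) ≤ 1 - z) h0 (by ring)
  simp only [smul_eq_mul, mul_zero, mul_one, zero_add, Real.exp_zero] at hcx
  have he : Real.exp 1 ≤ 3 := by
    have := Real.exp_one_lt_d9
    linarith
  nlinarith [hcx]


/-- rank-1 replacement theorem. If `∏ ‖W_j‖ ≥ Γ` and `∏ ‖W_j‖_p ≤ M`, then
for any `r ∈ {1,…,d}` one can replace the parameter matrix of some layer `r' ≤ r`
(0-indexed: `r' < r`) by a matrix of rank at most 1 so that the network output changes by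
at most `B·(∏ ‖W_j‖)·(2p·log(M/Γ)/r)^{1/p}` on `{‖x‖ ≤ B}`. -/
theorem rank_one_replacement (dims : ℕ → ℕ) (d : ℕ) (hd : 1 ≤ d)
    (W : ∀ j : ℕ, Matrix (Fin (dims (j+1))) (Fin (dims j)) ℝ)
    (σ : ∀ j : ℕ, EuclideanSpace ℝ (Fin (dims (j+1))) → EuclideanSpace ℝ (Fin (dims (j+1))))
    (hσ : ∀ j, LipschitzWith 1 (σ j)) (hσ0 : ∀ j, σ j 0 = 0)
    (p Γ M B : ℝ) (hp : 1 ≤ p) (hΓ : 0 < Γ) (hB : 0 ≤ B)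
    (hΓle : Γ ≤ ∏ j ∈ Finset.range d, specNorm (W j))
    (hM : ∏ j ∈ Finset.range d, schattenNorm p (W j) ≤ M)
    (r : ℕ) (hr1 : 1 ≤ r) (hrd : r ≤ d) :
    ∃ (r' : ℕ) (_ : r' < r)
      (Wt : ∀ j : ℕ, Matrix (Fin (dims (j+1))) (Fin (dims j)) ℝ),
      (∀ j, j ≠ r' → Wt j = W j) ∧ (Wt r').rank ≤ 1 ∧
      ∀ x : EuclideanSpace ℝ (Fin (dims 0)), ‖x‖ ≤ B →
        ‖netEval dims W σ d x - netEval dims Wt σ d x‖ ≤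
          B * (∏ j ∈ Finset.range d, specNorm (W j)) *
            (2 * p * Real.log (M / Γ) / r) ^ (1 / p) := by
  have hp0 : 0 < p := lt_of_lt_of_le one_pos hp
  have hr0' : (0:ℝ) < r := by exact_mod_cast hr1
  set P := ∏ j ∈ Finset.range d, specNorm (W j) with hP
  have hPpos : 0 < P := lt_of_lt_of_le hΓ hΓle
  have hspec_pos : ∀ j ∈ Finset.range d, 0 < specNorm (W j) := by
    intro j hj
    rcases (specNorm_nonneg (W j)).lt_or_eq with h | h
    · exact h
    · exfalso
      have : P = 0 := Finset.prod_eq_zero hj h.symm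
      exact absurd (this ▸ hPpos) (lt_irrefl 0)
  have hPM : P ≤ M :=
    le_trans (Finset.prod_le_prod (fun j hj => le_of_lt (hspec_pos j hj))
      (fun j _ => specNorm_le_schattenNorm hp (W j))) hM
  have hMΓ : 1 ≤ M / Γ := (one_le_div hΓ).2 (le_trans hΓle hPM)
  have hMΓ0 : 0 < M / Γ := lt_of_lt_of_le one_pos hMΓ
  have hL : 0 ≤ Real.log (M / Γ) := Real.log_nonneg hMΓ
  set δ := (2 * p * Real.log (M / Γ) / r) ^ (1/p) with hδ
  have hδ0 : 0 ≤ δ := Real.rpow_nonneg (by positivity) _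
  by_cases hcase : (r:ℝ) ≤ p * Real.log (M / Γ)
  · -- Case A : zero out layer r-1
    have hδ1 : 1 ≤ δ := by
      have h2 : (1:ℝ) ≤ 2 * p * Real.log (M/Γ) / r := by
        rw [le_div_iff₀ hr0']
        nlinarith
      exact Real.one_le_rpow h2 (by positivity)
    refine ⟨r - 1, by omega, Function.update W (r-1) 0,
      fun j hj => Function.update_of_ne hj _ _, ?_, ?_⟩
    · rw [Function.update_self, Matrix.rank_zero]
      exact zero_le_one
    · intro x hx
      rw [show netEval dims (Function.update W (r-1) 0) σ d x = 0 from
        netEval_zero_layer dims _ σ hσ0 (by omega : r - 1 < d)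
          (Function.update_self _ _ _) x, sub_zero]
      refine (netEval_norm_le dims W σ hσ hσ0 hd x).trans ?_
      calc P * ‖x‖ ≤ P * B := mul_le_mul_of_nonneg_left hx (le_of_lt hPpos)
        _ = B * P * 1 := by ring
        _ ≤ B * P * δ := mul_le_mul_of_nonneg_left hδ1 (by positivity)
  · -- Case B
    set κ := (M/Γ) ^ ((1:ℝ)/(r:ℝ)) with hκ
    have hκ1 : 1 ≤ κ := Real.one_le_rpow hMΓ (by positivity)
    have hκpos : 0 < κ := lt_of_lt_of_le one_pos hκ1
    have hpig : ∃ j, j < r ∧ schattenNorm p (W j) ≤ specNorm (W j) * κ := by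
      by_contra hcon
      push_neg at hcon
      have h1 : ∏ j ∈ Finset.range r, (specNorm (W j) * κ)
          < ∏ j ∈ Finset.range r, schattenNorm p (W j) := by
        refine Finset.prod_lt_prod_of_nonempty ?_ ?_ ⟨0, Finset.mem_range.2 (by omega)⟩
        · intro j hj
          exact mul_pos (hspec_pos j (Finset.mem_range.2
            (lt_of_lt_of_le (Finset.mem_range.1 hj) hrd))) hκpos
        · intro j hj
          exact hcon j (Finset.mem_range.1 hj)
      have hsplit_sch : (∏ j ∈ Finset.range r, schattenNorm p (W j)) *
          ∏ j ∈ Finset.Ico r d, schattenNorm p (W j)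
          = ∏ j ∈ Finset.range d, schattenNorm p (W j) := by
        simp only [Finset.range_eq_Ico]
        exact Finset.prod_Ico_consecutive (fun j => schattenNorm p (W j)) (Nat.zero_le r) hrd
      have hsplit_sp : (∏ j ∈ Finset.range r, specNorm (W j)) *
          ∏ j ∈ Finset.Ico r d, specNorm (W j) = P := by
        rw [hP]
        simp only [Finset.range_eq_Ico]
        exact Finset.prod_Ico_consecutive (fun j => specNorm (W j)) (Nat.zero_le r) hrd
      have hIco_mem : ∀ j ∈ Finset.Ico r d, j ∈ Finset.range d := by
        intro j hj
        exact Finset.mem_range.2 (Finset.mem_Ico.1 hj).2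
      have hIco_le : ∏ j ∈ Finset.Ico r d, specNorm (W j)
          ≤ ∏ j ∈ Finset.Ico r d, schattenNorm p (W j) :=
        Finset.prod_le_prod (fun j hj => le_of_lt (hspec_pos j (hIco_mem j hj)))
          (fun j _ => specNorm_le_schattenNorm hp (W j))
      have hIco_pos : 0 < ∏ j ∈ Finset.Ico r d, specNorm (W j) :=
        Finset.prod_pos fun j hj => hspec_pos j (hIco_mem j hj)
      have h2 : ∏ j ∈ Finset.range r, (specNorm (W j) * κ)
          = (∏ j ∈ Finset.range r, specNorm (W j)) * κ ^ r := by
        rw [Finset.prod_mul_distrib, Finset.prod_const, Finset.card_range]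
      have hκr : κ ^ r = M/Γ := by
        rw [hκ, ← Real.rpow_natCast ((M/Γ) ^ ((1:ℝ)/(r:ℝ))) r,
          ← Real.rpow_mul (le_of_lt hMΓ0), one_div,
          inv_mul_cancel₀ (ne_of_gt hr0'), Real.rpow_one]
      have hfinal : M < M := by
        have hsch_nonneg : 0 ≤ ∏ j ∈ Finset.range r, schattenNorm p (W j) :=
          Finset.prod_nonneg fun j _ => schattenNorm_nonneg _ _
        calc M = (M/Γ) * Γ := by field_simp
          _ ≤ (M/Γ) * P := mul_le_mul_of_nonneg_left hΓle (le_of_lt hMΓ0)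
          _ = (∏ j ∈ Finset.range r, (specNorm (W j) * κ)) *
              ∏ j ∈ Finset.Ico r d, specNorm (W j) := by
            rw [h2, ← hκr] at *
            rw [← hsplit_sp]
            ring
          _ < (∏ j ∈ Finset.range r, schattenNorm p (W j)) *
              ∏ j ∈ Finset.Ico r d, specNorm (W j) :=
            mul_lt_mul_of_pos_right h1 hIco_pos
          _ ≤ (∏ j ∈ Finset.range r, schattenNorm p (W j)) *
              ∏ j ∈ Finset.Ico r d, schattenNorm p (W j) :=
            mul_le_mul_of_nonneg_left hIco_le hsch_nonneg
          _ = ∏ j ∈ Finset.range d, schattenNorm p (W j) := hsplit_sch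
          _ ≤ M := hM
      exact absurd hfinal (lt_irrefl M)
    obtain ⟨r', hr'r, hratio⟩ := hpig
    have hr'd : r' < d := lt_of_lt_of_le hr'r hrd
    obtain ⟨Wt0, hrank, hbound⟩ := rank_one_approx hp (W r')
    set Wt := Function.update W r' Wt0 with hWt
    have hWt_r' : Wt r' = Wt0 := Function.update_self _ _ _
    set sp := specNorm (W r') with hsp'
    have hsp : 0 < sp := hspec_pos r' (Finset.mem_range.2 hr'd)
    have hκp : κ ^ p = Real.exp (p * Real.log (M/Γ) / r) := by
      rw [hκ, ← Real.rpow_mul (le_of_lt hMΓ0), Real.rpow_def_of_pos hMΓ0]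
      congr 1
      field_simp
    have hz1 : p * Real.log (M/Γ) / r ≤ 1 := by
      rw [div_le_one hr0']
      linarith [not_le.1 hcase]
    have hz0' : 0 ≤ p * Real.log (M/Γ) / r := by positivity
    have hexp : κ ^ p ≤ 1 + 2 * (p * Real.log (M/Γ) / r) := by
      rw [hκp]
      exact exp_le_one_add_two_mul hz0' hz1
    have hεle : (schattenNorm p (W r') ^ p - sp ^ p) ^ (1/p) ≤ sp * δ := by
      have hs1 : schattenNorm p (W r') ^ p ≤ (sp * κ)^p :=
        Real.rpow_le_rpow (schattenNorm_nonneg _ _) hratio (le_of_lt hp0)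
      have hs2 : (sp * κ)^p = sp^p * κ^p := Real.mul_rpow (le_of_lt hsp) (le_of_lt hκpos)
      have hspp : (0:ℝ) ≤ sp ^ p := Real.rpow_nonneg (le_of_lt hsp) p
      have h3 : sp^p * κ^p ≤ sp^p * (1 + 2 * (p * Real.log (M/Γ) / r)) :=
        mul_le_mul_of_nonneg_left hexp hspp
      have hbase2 : schattenNorm p (W r')^p - sp^p ≤ sp^p * (2 * p * Real.log (M/Γ) / r) := by
        calc schattenNorm p (W r')^p - sp^p
            ≤ sp^p * (1 + 2 * (p * Real.log (M/Γ) / r)) - sp^p := by linarith [hs1, hs2, h3]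
          _ = sp^p * (2 * p * Real.log (M/Γ) / r) := by ring
      have hsub0 : 0 ≤ schattenNorm p (W r')^p - sp^p :=
        sub_nonneg.2 (Real.rpow_le_rpow (specNorm_nonneg _)
          (specNorm_le_schattenNorm hp _) (le_of_lt hp0))
      calc (schattenNorm p (W r') ^ p - sp ^ p) ^ (1/p)
          ≤ (sp^p * (2 * p * Real.log (M/Γ) / r)) ^ (1/p) :=
            Real.rpow_le_rpow hsub0 hbase2 (by positivity)
        _ = sp * δ := by
            rw [Real.mul_rpow hspp (by positivity), hδ,
              ← Real.rpow_mul (le_of_lt hsp), mul_one_div, div_self (ne_of_gt hp0),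
              Real.rpow_one]
    refine ⟨r', hr'r, Wt, fun j hj => Function.update_of_ne hj _ _, ?_, ?_⟩
    · rw [hWt_r']
      exact hrank
    · intro x hx
      have hpert : ∀ v : EuclideanSpace ℝ (Fin (dims r')),
          ‖mulVecE (W r') v - mulVecE (Wt r') v‖ ≤ (sp * δ) * ‖v‖ := by
        intro v
        rw [hWt_r']
        exact (hbound v).trans (mul_le_mul_of_nonneg_right hεle (norm_nonneg v))
      have hmain := net_perturb dims W Wt σ hσ hσ0 hr'd
        (fun j hj => Function.update_of_ne hj _ _)
        (mul_nonneg (le_of_lt hsp) hδ0) hpert x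
      refine hmain.trans ?_
      have hprod : sp * ∏ j ∈ (Finset.range d).erase r', specNorm (W j) = P := by
        rw [hsp', hP]
        exact Finset.mul_prod_erase _ (fun j => specNorm (W j)) (Finset.mem_range.2 hr'd)
      have herase_nonneg : 0 ≤ ∏ j ∈ (Finset.range d).erase r', specNorm (W j) :=
        Finset.prod_nonneg fun j _ => specNorm_nonneg _
      calc (sp * δ) * (∏ j ∈ (Finset.range d).erase r', specNorm (W j)) * ‖x‖
          = (sp * ∏ j ∈ (Finset.range d).erase r', specNorm (W j)) * δ * ‖x‖ := by ring
        _ = P * δ * ‖x‖ := by rw [hprod]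
        _ ≤ P * δ * B := mul_le_mul_of_nonneg_left hx (by positivity)
        _ = B * P * δ := by ring
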